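/- arXiv:1704.05553 — 3 statements merged into one kernel-verified Lean document; each statement's English description precedes it below -/
import Mathlib

section
/- Let m, n ≥ 1, let O ⊆ ℝᵐ be open, and let u : ℝᵐ → ℂⁿ be twice continuously differentiable on O. Suppose the Gram matrix g(t), with entries g_{ij}(t) = ⟨∂_i u(t), ∂_j u(t)⟩, is invertible for every t ∈ O; write s(t) = √(det g(t)) and g^{ij}(t) for the entries of g(t)⁻¹. Assume u is isotropic on O: ⟨J ∂_i u(t), ∂_j u(t)⟩ = 0 for all t ∈ O and all i, j. Then for every t ∈ O, Σ_{i,j} ∂_j( s · g^{ij} · ⟨J u, ∂_i u⟩ )(t) = ⟨J u(t), Σ_{i,j} ∂_j( s · g^{ij} · ∂_i u )(t)⟩. In particular, if additionally ⟨J u(t), Δ_g u(t)⟩ = 0 for all t ∈ O, where Δ_g u := s⁻¹ Σ_{i,j} ∂_j( s · g^{ij} · ∂_i u ), then Σ_{i,j} ∂_j( s · g^{ij} · ⟨J u, ∂_i u⟩ ) = 0 on O (the 1-form α = Σ_i ⟨J u, ∂_i u⟩ dt^i is coclosed). -/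
/-- The standard complex structure `J x = i • x` on `ℂⁿ`. -/
noncomputable def Jc {n : ℕ} (x : EuclideanSpace ℂ (Fin n)) : EuclideanSpace ℂ (Fin n) :=
  Complex.I • x

/-- The real inner product `⟨x, y⟩ = Re ⟪x, y⟫` on `ℂⁿ`. -/
noncomputable def rinner {n : ℕ} (x y : EuclideanSpace ℂ (Fin n)) : ℝ :=
  (inner ℂ x y : ℂ).re

/-- Partial derivative in the `k`-th coordinate direction of a map on `ℝᵐ`. -/
noncomputable def pd {m : ℕ} {E : Type*} [NormedAddCommGroup E] [NormedSpace ℝ E]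
    (k : Fin m) (f : EuclideanSpace ℝ (Fin m) → E) (t : EuclideanSpace ℝ (Fin m)) : E :=
  fderiv ℝ f t (EuclideanSpace.single k 1)

/-- The Gram matrix `g_{ij} = ⟨∂_i u, ∂_j u⟩` of an immersion `u : ℝᵐ → ℂⁿ`. -/
noncomputable def gram {m n : ℕ} (u : EuclideanSpace ℝ (Fin m) → EuclideanSpace ℂ (Fin n))
    (t : EuclideanSpace ℝ (Fin m)) : Matrix (Fin m) (Fin m) ℝ :=
  fun i j => rinner (pd i u t) (pd j u t)

section Aux

variable {m n : ℕ}

lemma rinner_add_right (x y z : EuclideanSpace ℂ (Fin n)) :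
    rinner x (y + z) = rinner x y + rinner x z := by
  simp [rinner, inner_add_right]

lemma rinner_smul_right (r : ℝ) (x y : EuclideanSpace ℂ (Fin n)) :
    rinner x (r • y) = r * rinner x y := by
  rw [rinner, rinner, RCLike.real_smul_eq_coe_smul (K := ℂ) r y,
    inner_smul_real_right, Complex.smul_re, smul_eq_mul]

lemma rinner_sum {ι : Type*} (s : Finset ι) (x : EuclideanSpace ℂ (Fin n))
    (f : ι → EuclideanSpace ℂ (Fin n)) :
    rinner x (∑ i ∈ s, f i) = ∑ i ∈ s, rinner x (f i) := by
  simp [rinner, inner_sum, Complex.re_sum]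

lemma diffAt_det {X : Type*} [NormedAddCommGroup X] [NormedSpace ℝ X] {k : ℕ}
    {A : X → Matrix (Fin k) (Fin k) ℝ} {t : X}
    (hA : ∀ i j, DifferentiableAt ℝ (fun x => A x i j) t) :
    DifferentiableAt ℝ (fun x => (A x).det) t := by
  simp only [Matrix.det_apply']
  classical
  refine DifferentiableAt.fun_sum fun σ _ => DifferentiableAt.const_mul ?_ _
  exact (HasFDerivAt.finset_prod (fun p _ => (hA (σ p) p).hasFDerivAt)).differentiableAt

lemma diffAt_adjugate {X : Type*} [NormedAddCommGroup X] [NormedSpace ℝ X] {k : ℕ}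
    {A : X → Matrix (Fin k) (Fin k) ℝ} {t : X}
    (hA : ∀ i j, DifferentiableAt ℝ (fun x => A x i j) t) (i j : Fin k) :
    DifferentiableAt ℝ (fun x => (A x).adjugate i j) t := by
  simp only [Matrix.adjugate_apply]
  apply diffAt_det
  intro i' j'
  rcases eq_or_ne i' j with h | h <;>
    simp only [Matrix.updateRow_apply, h, if_true, if_false, reduceIte]
  · exact differentiableAt_const _
  · exact hA i' j'

lemma gram_det_pos {u : EuclideanSpace ℝ (Fin m) → EuclideanSpace ℂ (Fin n)}
    {t : EuclideanSpace ℝ (Fin m)} (hg : IsUnit (gram u t)) : 0 < (gram u t).det := by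
  have hne : (gram u t).det ≠ 0 :=
    isUnit_iff_ne_zero.mp ((Matrix.isUnit_iff_isUnit_det _).mp hg)
  have hps : (gram u t).PosSemidef := by
    refine Matrix.PosSemidef.of_dotProduct_mulVec_nonneg ?_ ?_
    · ext i j
      simp only [Matrix.conjTranspose_apply, gram, star_trivial, rinner]
      exact inner_re_symm (𝕜 := ℂ) _ _
    · intro x
      have key : dotProduct (star x) (Matrix.mulVec (gram u t) x)
          = (inner ℂ (∑ i, x i • pd i u t) (∑ i, x i • pd i u t) : ℂ).re := by
        rw [sum_inner (𝕜 := ℂ)]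
        simp only [dotProduct, Matrix.mulVec, star_trivial, Complex.re_sum,
          dotProduct, gram, rinner]
        refine Finset.sum_congr rfl fun i _ => ?_
        rw [inner_sum (𝕜 := ℂ), Complex.re_sum, Finset.mul_sum]
        refine Finset.sum_congr rfl fun j _ => ?_
        rw [RCLike.real_smul_eq_coe_smul (K := ℂ) (x i), RCLike.real_smul_eq_coe_smul (K := ℂ) (x j),
          inner_smul_real_left, inner_smul_real_right, Complex.smul_re, Complex.smul_re]
        simp [mul_comm, mul_left_comm]
      rw [key]
      exact inner_self_nonneg (𝕜 := ℂ)
  have h0 : 0 ≤ (gram u t).det := by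
    rw [hps.isHermitian.det_eq_prod_eigenvalues]
    exact Finset.prod_nonneg fun i _ => by simpa using hps.eigenvalues_nonneg i
  exact lt_of_le_of_ne h0 (Ne.symm hne)

end Aux

/-- For a `C²` isotropic map `u : ℝᵐ → ℂⁿ` with invertible Gram matrix on an open set `O`,
the divergence `Σ_{i,j} ∂_j (s g^{ij} ⟨Ju, ∂_i u⟩)` equals `⟨Ju, Σ_{i,j} ∂_j (s g^{ij} ∂_i u)⟩`;
in particular if `⟨Ju, Δ_g u⟩ = 0` on `O` then the 1-form `α = Σ_i ⟨Ju, ∂_i u⟩ dt^i`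
is coclosed on `O`. -/
theorem coclosedness_of_alpha (m n : ℕ) (hm : 1 ≤ m) (hn : 1 ≤ n)
    (O : Set (EuclideanSpace ℝ (Fin m))) (hO : IsOpen O)
    (u : EuclideanSpace ℝ (Fin m) → EuclideanSpace ℂ (Fin n))
    (hu : ContDiffOn ℝ 2 u O)
    (hg : ∀ t ∈ O, IsUnit (gram u t))
    (s : EuclideanSpace ℝ (Fin m) → ℝ) (hs : ∀ t, s t = Real.sqrt (gram u t).det)
    (ginv : EuclideanSpace ℝ (Fin m) → Matrix (Fin m) (Fin m) ℝ)
    (hginv : ∀ t, ginv t = (gram u t)⁻¹)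
    (hiso : ∀ t ∈ O, ∀ i j : Fin m, rinner (Jc (pd i u t)) (pd j u t) = 0) :
    (∀ t ∈ O,
      (∑ i : Fin m, ∑ j : Fin m,
          pd j (fun t => s t * ginv t i j * rinner (Jc (u t)) (pd i u t)) t)
        = rinner (Jc (u t))
            (∑ i : Fin m, ∑ j : Fin m, pd j (fun t => (s t * ginv t i j) • pd i u t) t))
    ∧ ((∀ t ∈ O, rinner (Jc (u t))
          ((s t)⁻¹ • ∑ i : Fin m, ∑ j : Fin m,
            pd j (fun t => (s t * ginv t i j) • pd i u t) t) = 0) →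
        ∀ t ∈ O,
          (∑ i : Fin m, ∑ j : Fin m,
            pd j (fun t => s t * ginv t i j * rinner (Jc (u t)) (pd i u t)) t) = 0) := by
  classical
  have hpdC : ∀ k : Fin m, ContDiffOn ℝ 1 (pd k u) O := by
    intro k
    have h1 : ContDiffOn ℝ 1 (fderiv ℝ u) O := hu.fderiv_of_isOpen hO (by norm_num)
    exact (ContinuousLinearMap.apply ℝ (EuclideanSpace ℂ (Fin n))
      (EuclideanSpace.single k (1 : ℝ))).contDiff.comp_contDiffOn h1
  have hdv : ∀ t ∈ O, ∀ k : Fin m, DifferentiableAt ℝ (pd k u) t := fun t ht k =>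
    ((hpdC k).differentiableOn one_ne_zero).differentiableAt (hO.mem_nhds ht)
  have hgramD : ∀ t ∈ O, ∀ i j : Fin m, DifferentiableAt ℝ (fun x => gram u x i j) t := by
    intro t ht i j
    have h1 : DifferentiableAt ℝ (fun x => (inner ℂ (pd i u x) (pd j u x) : ℂ)) t :=
      (hdv t ht i).inner ℂ (hdv t ht j)
    exact (Complex.reCLM.differentiable.differentiableAt).comp t h1
  have hdet : ∀ t ∈ O, DifferentiableAt ℝ (fun x => (gram u x).det) t := fun t ht =>
    diffAt_det (fun i j => hgramD t ht i j)
  have hdetpos : ∀ t ∈ O, 0 < (gram u t).det := fun t ht => gram_det_pos (hg t ht)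
  have hsD : ∀ t ∈ O, DifferentiableAt ℝ s t := by
    intro t ht
    have h2 : DifferentiableAt ℝ (fun x => Real.sqrt ((gram u x).det)) t :=
      (Real.hasDerivAt_sqrt (hdetpos t ht).ne').differentiableAt.comp t (hdet t ht)
    have : s = fun x => Real.sqrt ((gram u x).det) := funext hs
    rw [this]; exact h2
  have hginvD : ∀ t ∈ O, ∀ i j : Fin m, DifferentiableAt ℝ (fun x => ginv x i j) t := by
    intro t ht i j
    have heq : (fun x => ginv x i j) = fun x => ((gram u x).det)⁻¹ * (gram u x).adjugate i j := by
      funext x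
      rw [hginv, Matrix.inv_def, Matrix.smul_apply, Ring.inverse_eq_inv', smul_eq_mul]
    rw [heq]
    exact ((hdet t ht).inv (hdetpos t ht).ne').mul
      (diffAt_adjugate (fun a b => hgramD t ht a b) i j)
  have hcD : ∀ t ∈ O, ∀ i j : Fin m, DifferentiableAt ℝ (fun x => s x * ginv x i j) t :=
    fun t ht i j => (hsD t ht).mul (hginvD t ht i j)
  have key : ∀ t ∈ O, ∀ i j : Fin m,
      pd j (fun x => s x * ginv x i j * rinner (Jc (u x)) (pd i u x)) t
        = rinner (Jc (u t)) (pd j (fun x => (s x * ginv x i j) • pd i u x) t) := by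
    intro t ht i j
    have hU : HasFDerivAt u (fderiv ℝ u t) t :=
      ((hu.differentiableOn (by norm_num)).differentiableAt (hO.mem_nhds ht)).hasFDerivAt
    have hw : HasFDerivAt (fun x => Jc (u x)) (Complex.I • fderiv ℝ u t) t := by
      simpa only [Jc] using hU.fun_const_smul Complex.I
    have hv : HasFDerivAt (pd i u) (fderiv ℝ (pd i u) t) t := (hdv t ht i).hasFDerivAt
    have hcf : HasFDerivAt (fun x => s x * ginv x i j)
        (fderiv ℝ (fun x => s x * ginv x i j) t) t := (hcD t ht i j).hasFDerivAt
    have hin : HasFDerivAt (fun x => (inner ℂ (Jc (u x)) (pd i u x) : ℂ))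
        ((fderivInnerCLM ℂ (Jc (u t), pd i u t)).comp
          ((Complex.I • fderiv ℝ u t).prod (fderiv ℝ (pd i u) t))) t := hw.inner ℂ hv
    have hre : HasFDerivAt (fun x => rinner (Jc (u x)) (pd i u x))
        (Complex.reCLM.comp ((fderivInnerCLM ℂ (Jc (u t), pd i u t)).comp
          ((Complex.I • fderiv ℝ u t).prod (fderiv ℝ (pd i u) t)))) t :=
      (Complex.reCLM.hasFDerivAt).comp t hin
    have hL := hcf.fun_mul hre
    have hR := hcf.fun_smul hv
    rw [pd, pd, hL.fderiv, hR.fderiv]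
    simp only [ContinuousLinearMap.add_apply, ContinuousLinearMap.smul_apply,
      ContinuousLinearMap.coe_comp', Function.comp_apply, ContinuousLinearMap.prod_apply,
      ContinuousLinearMap.smulRight_apply, fderivInnerCLM_apply, smul_eq_mul]
    rw [rinner_add_right, rinner_smul_right, rinner_smul_right]
    have hz : rinner (Jc (pd j u t)) (pd i u t) = 0 := hiso t ht j i
    have hJ : Complex.I • (fderiv ℝ u t) (EuclideanSpace.single j 1) = Jc (pd j u t) := rfl
    have hre2 : Complex.reCLM
        ((inner ℂ (Jc (u t)) ((fderiv ℝ (pd i u) t) (EuclideanSpace.single j 1)) : ℂ)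
          + inner ℂ (Complex.I • (fderiv ℝ u t) (EuclideanSpace.single j 1)) (pd i u t))
        = rinner (Jc (u t)) ((fderiv ℝ (pd i u) t) (EuclideanSpace.single j 1))
          + rinner (Jc (pd j u t)) (pd i u t) := by
      rw [hJ]; simp [rinner]
    rw [hre2, hz]
    ring
  have part1 : ∀ t ∈ O,
      (∑ i : Fin m, ∑ j : Fin m,
          pd j (fun t => s t * ginv t i j * rinner (Jc (u t)) (pd i u t)) t)
        = rinner (Jc (u t))
            (∑ i : Fin m, ∑ j : Fin m, pd j (fun t => (s t * ginv t i j) • pd i u t) t) := by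
    intro t ht
    simp only [rinner_sum]
    exact Finset.sum_congr rfl fun i _ => Finset.sum_congr rfl fun j _ => key t ht i j
  refine ⟨part1, fun h0 t ht => ?_⟩
  have h1 := h0 t ht
  rw [rinner_smul_right] at h1
  have hsne : (s t)⁻¹ ≠ 0 := by
    rw [hs]
    exact inv_ne_zero (Real.sqrt_pos.mpr (hdetpos t ht)).ne'
  rw [part1 t ht]
  exact (mul_eq_zero.mp h1).resolve_left hsne
end

section
/- Let n ≥ 1, let O ⊆ ℂ be open, and let u : ℂ → ℂⁿ be twice continuously differentiable on O (regarding ℂ ≅ ℝ², with ∂₁, ∂₂ the partial derivatives in the real and imaginary coordinate directions). Assume on O: (i) isotropy: ⟨J ∂₁u, ∂₂u⟩ = 0, and (ii) the Hamiltonian stationarity condition ⟨J u, ∂₁∂₁u + ∂₂∂₂u⟩ = 0. Then the function F : O → ℂ defined by F(w) = ⟨J u(w), ∂₁u(w)⟩ − i·⟨J u(w), ∂₂u(w)⟩ satisfies the Cauchy–Riemann equation ∂₁F + i ∂₂F = 0 on O; equivalently, F is complex differentiable (holomorphic) on O. -/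
/-- Partial derivative in the real coordinate direction for a map on `ℂ ≅ ℝ²`. -/
noncomputable def pd1 {E : Type*} [NormedAddCommGroup E] [NormedSpace ℝ E]
    (f : ℂ → E) (w : ℂ) : E :=
  fderiv ℝ f w 1

/-- Partial derivative in the imaginary coordinate direction for a map on `ℂ ≅ ℝ²`. -/
noncomputable def pd2 {E : Type*} [NormedAddCommGroup E] [NormedSpace ℝ E]
    (f : ℂ → E) (w : ℂ) : E :=
  fderiv ℝ f w Complex.I

lemma rinner_Jc_eq_im {n : ℕ} (x y : EuclideanSpace ℂ (Fin n)) :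
    rinner (Jc x) y = (inner ℂ x y : ℂ).im := by
  simp [rinner, Jc, inner_smul_left, Complex.mul_re]

/-- For a `C²` isotropic map `u : ℂ → ℂⁿ` on an open set `O` satisfying the Hamiltonian
stationarity condition `⟨Ju, ∂₁∂₁u + ∂₂∂₂u⟩ = 0`, the Hopf-type function
`F = ⟨Ju, ∂₁u⟩ - i⟨Ju, ∂₂u⟩` satisfies the Cauchy–Riemann equation `∂₁F + i∂₂F = 0` on `O`;
equivalently, `F` is holomorphic on `O`. -/
theorem hopf_function_holomorphic (n : ℕ) (hn : 1 ≤ n)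
    (O : Set ℂ) (hO : IsOpen O)
    (u : ℂ → EuclideanSpace ℂ (Fin n))
    (hu : ContDiffOn ℝ 2 u O)
    (hiso : ∀ w ∈ O, rinner (Jc (pd1 u w)) (pd2 u w) = 0)
    (hHS : ∀ w ∈ O, rinner (Jc (u w)) (pd1 (pd1 u) w + pd2 (pd2 u) w) = 0)
    (F : ℂ → ℂ)
    (hF : ∀ w, F w = (rinner (Jc (u w)) (pd1 u w) : ℂ)
      - Complex.I * (rinner (Jc (u w)) (pd2 u w) : ℂ)) :
    (∀ w ∈ O, pd1 F w + Complex.I * pd2 F w = 0) ∧ DifferentiableOn ℂ F O := by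
  have key : ∀ w ∈ O, (pd1 F w + Complex.I * pd2 F w = 0) ∧ DifferentiableAt ℂ F w := by
    intro w hw
    have hmem : O ∈ nhds w := hO.mem_nhds hw
    have hudiff : ∀ y ∈ O, HasFDerivAt u (fderiv ℝ u y) y := fun y hy =>
      ((hu.contDiffAt (hO.mem_nhds hy)).differentiableAt (by norm_num)).hasFDerivAt
    have hf'C1 : ContDiffOn ℝ 1 (fderiv ℝ u) O := hu.fderiv_of_isOpen hO (by norm_num)
    have hf''d : HasFDerivAt (fderiv ℝ u) (fderiv ℝ (fderiv ℝ u) w) w :=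
      ((hf'C1.contDiffAt hmem).differentiableAt (by norm_num)).hasFDerivAt
    have hsymm : fderiv ℝ (fderiv ℝ u) w 1 Complex.I
        = fderiv ℝ (fderiv ℝ u) w Complex.I 1 :=
      second_derivative_symmetric_of_eventually
        (Filter.eventually_of_mem hmem hudiff) hf''d 1 Complex.I
    set c1 := ContinuousLinearMap.apply ℝ (EuclideanSpace ℂ (Fin n)) (1 : ℂ) with hc1
    set cI := ContinuousLinearMap.apply ℝ (EuclideanSpace ℂ (Fin n)) Complex.I with hcI
    set f'' := fderiv ℝ (fderiv ℝ u) w with hf''def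
    have hg1 : HasFDerivAt (pd1 u) (c1.comp f'') w := c1.hasFDerivAt.comp w hf''d
    have hg2 : HasFDerivAt (pd2 u) (cI.comp f'') w := cI.hasFDerivAt.comp w hf''d
    have hu1 : HasFDerivAt u (fderiv ℝ u w) w := hudiff w hw
    have hA : HasFDerivAt (fun y => (inner ℂ (u y) (pd1 u y) : ℂ))
        ((fderivInnerCLM ℂ (u w, pd1 u w)).comp ((fderiv ℝ u w).prod (c1.comp f''))) w :=
      hu1.inner ℂ hg1
    have hB : HasFDerivAt (fun y => (inner ℂ (u y) (pd2 u y) : ℂ))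
        ((fderivInnerCLM ℂ (u w, pd2 u w)).comp ((fderiv ℝ u w).prod (cI.comp f''))) w :=
      hu1.inner ℂ hg2
    have hAa : HasFDerivAt (fun y => rinner (Jc (u y)) (pd1 u y))
        (Complex.imCLM.comp ((fderivInnerCLM ℂ (u w, pd1 u w)).comp
          ((fderiv ℝ u w).prod (c1.comp f'')))) w := by
      have : (fun y => rinner (Jc (u y)) (pd1 u y))
          = fun y => ((inner ℂ (u y) (pd1 u y) : ℂ)).im := funext fun y => rinner_Jc_eq_im _ _
      rw [this]
      exact Complex.imCLM.hasFDerivAt.comp w hA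
    have hBb : HasFDerivAt (fun y => rinner (Jc (u y)) (pd2 u y))
        (Complex.imCLM.comp ((fderivInnerCLM ℂ (u w, pd2 u w)).comp
          ((fderiv ℝ u w).prod (cI.comp f'')))) w := by
      have : (fun y => rinner (Jc (u y)) (pd2 u y))
          = fun y => ((inner ℂ (u y) (pd2 u y) : ℂ)).im := funext fun y => rinner_Jc_eq_im _ _
      rw [this]
      exact Complex.imCLM.hasFDerivAt.comp w hB
    set LF : ℂ →L[ℝ] ℂ :=
      Complex.ofRealCLM.comp (Complex.imCLM.comp ((fderivInnerCLM ℂ (u w, pd1 u w)).comp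
          ((fderiv ℝ u w).prod (c1.comp f''))))
        - Complex.I • Complex.ofRealCLM.comp
            (Complex.imCLM.comp ((fderivInnerCLM ℂ (u w, pd2 u w)).comp
              ((fderiv ℝ u w).prod (cI.comp f'')))) with hLFdef
    have hFd : HasFDerivAt F LF w := by
      rw [funext hF]
      exact (Complex.ofRealCLM.hasFDerivAt.comp w hAa).sub
        ((Complex.ofRealCLM.hasFDerivAt.comp w hBb).const_mul Complex.I)
    have hLFv : ∀ v : ℂ, LF v =
        ((((inner ℂ (u w) (f'' v 1) : ℂ) + (inner ℂ (fderiv ℝ u w v) (pd1 u w) : ℂ)).im : ℝ) : ℂ)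
        - Complex.I *
          ((((inner ℂ (u w) (f'' v Complex.I) : ℂ)
              + (inner ℂ (fderiv ℝ u w v) (pd2 u w) : ℂ)).im : ℝ) : ℂ) := by
      intro v
      simp only [hLFdef, hc1, hcI, ContinuousLinearMap.sub_apply, ContinuousLinearMap.smul_apply,
        ContinuousLinearMap.coe_comp', Function.comp_apply, ContinuousLinearMap.prod_apply,
        fderivInnerCLM_apply, ContinuousLinearMap.apply_apply, Complex.imCLM_apply,
        Complex.ofRealCLM_apply, smul_eq_mul]
    have h11 : pd1 (pd1 u) w = f'' 1 1 := by
      show fderiv ℝ (pd1 u) w 1 = _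
      rw [hg1.fderiv]; rfl
    have hII : pd2 (pd2 u) w = f'' Complex.I Complex.I := by
      show fderiv ℝ (pd2 u) w Complex.I = _
      rw [hg2.fderiv]; rfl
    have hfw1 : fderiv ℝ u w 1 = pd1 u w := rfl
    have hfwI : fderiv ℝ u w Complex.I = pd2 u w := rfl
    have kHS : (inner ℂ (u w) (f'' 1 1) : ℂ).im + (inner ℂ (u w) (f'' Complex.I Complex.I) : ℂ).im
        = 0 := by
      have h := hHS w hw
      rw [rinner_Jc_eq_im, h11, hII, inner_add_right, Complex.add_im] at h
      exact h
    have kiso : (inner ℂ (pd1 u w) (pd2 u w) : ℂ).im = 0 := by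
      have h := hiso w hw
      rwa [rinner_Jc_eq_im] at h
    have kiso' : (inner ℂ (pd2 u w) (pd1 u w) : ℂ).im = 0 := by
      rw [← inner_conj_symm, Complex.conj_im, kiso, neg_zero]
    have hself1 : (inner ℂ (pd1 u w) (pd1 u w) : ℂ).im = 0 := by
      simpa using inner_self_im (𝕜 := ℂ) (pd1 u w)
    have hself2 : (inner ℂ (pd2 u w) (pd2 u w) : ℂ).im = 0 := by
      simpa using inner_self_im (𝕜 := ℂ) (pd2 u w)
    have e2 : (inner ℂ (u w) (f'' Complex.I 1) : ℂ).im
        = (inner ℂ (u w) (f'' 1 Complex.I) : ℂ).im := by rw [hsymm]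
    have kHSc : (((inner ℂ (u w) (f'' 1 1) : ℂ).im : ℂ))
        + (((inner ℂ (u w) (f'' Complex.I Complex.I) : ℂ).im : ℂ)) = 0 := by
      exact_mod_cast kHS
    have hCR : LF 1 + Complex.I * LF Complex.I = 0 := by
      rw [hLFv 1, hLFv Complex.I, hfw1, hfwI]
      simp only [Complex.add_im, hself1, hself2, kiso, kiso', e2, add_zero]
      linear_combination kHSc
        - (((inner ℂ (u w) (f'' Complex.I Complex.I) : ℂ).im : ℂ)) * Complex.I_sq
    have hlin : LF Complex.I = Complex.I * LF 1 := by
      rw [hLFv 1, hLFv Complex.I, hfw1, hfwI]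
      simp only [Complex.add_im, hself1, hself2, kiso, kiso', e2, add_zero]
      linear_combination -Complex.I * kHSc
        + (((inner ℂ (u w) (f'' 1 Complex.I) : ℂ).im : ℂ)) * Complex.I_sq
    have hzval : ∀ z : ℂ, LF z = z * LF 1 := by
      intro z
      conv_lhs => rw [show z = z.re • (1 : ℂ) + z.im • Complex.I by
        simp [Complex.real_smul, Complex.re_add_im]]
      rw [map_add, map_smul, map_smul, hlin, Complex.real_smul, Complex.real_smul]
      conv_rhs => rw [← Complex.re_add_im z]
      ring
    have hrs : ((1 : ℂ →L[ℂ] ℂ).smulRight (LF 1)).restrictScalars ℝ = LF := by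
      ext z
      simp only [ContinuousLinearMap.coe_restrictScalars',
        ContinuousLinearMap.smulRight_apply, ContinuousLinearMap.one_apply, smul_eq_mul]
      rw [hzval z]
    have hC : HasFDerivAt F ((1 : ℂ →L[ℂ] ℂ).smulRight (LF 1)) w :=
      hasFDerivAt_of_restrictScalars ℝ hFd hrs
    refine ⟨?_, hC.differentiableAt⟩
    have hp1 : pd1 F w = LF 1 := by
      show fderiv ℝ F w 1 = _
      rw [hFd.fderiv]
    have hp2 : pd2 F w = LF Complex.I := by
      show fderiv ℝ F w Complex.I = _
      rw [hFd.fderiv]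
    rw [hp1, hp2]
    exact hCR
  exact ⟨fun w hw => (key w hw).1, fun w hw => ((key w hw).2).differentiableWithinAt⟩
end

section
/- Let n ≥ 1, let O, O′ ⊆ ℂ be open, let φ : O′ → O be holomorphic, and let u : ℂ → ℂⁿ be continuously differentiable on O (regarding ℂ ≅ ℝ², with ∂₁, ∂₂ the partial derivatives in the real and imaginary coordinate directions). For a continuously differentiable map v into ℂⁿ set F_v(w) = ⟨J v(w), ∂₁v(w)⟩ − i·⟨J v(w), ∂₂v(w)⟩. Then for ũ := u ∘ φ one has F_ũ(w) = F_u(φ(w)) · φ′(w) for every w ∈ O′. -/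
/-- The Hopf-type function `F_v = ⟨Jv, ∂₁v⟩ - i⟨Jv, ∂₂v⟩` of a map `v : ℂ → ℂⁿ`. -/
noncomputable def hopfF {n : ℕ} (v : ℂ → EuclideanSpace ℂ (Fin n)) (w : ℂ) : ℂ :=
  (rinner (Jc (v w)) (pd1 v w) : ℂ) - Complex.I * (rinner (Jc (v w)) (pd2 v w) : ℂ)

lemma rinner_comb {n : ℕ} (x y z : EuclideanSpace ℂ (Fin n)) (r s : ℝ) :
    rinner x (r • y + s • z) = r * rinner x y + s * rinner x z := by
  have h : ∀ (v : EuclideanSpace ℂ (Fin n)) (r : ℝ),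
      (inner ℂ x (r • v) : ℂ) = (r : ℂ) * inner ℂ x v := by
    intro v r
    rw [RCLike.real_smul_eq_coe_smul (K := ℂ), inner_smul_right]
    rfl
  simp only [rinner, inner_add_right, Complex.add_re, h, Complex.mul_re,
    Complex.ofReal_re, Complex.ofReal_im]
  ring

/-- Transformation law for the Hopf-type quantity under a holomorphic change of
coordinates: for `ũ = u ∘ φ` with `φ` holomorphic, `F_ũ(w) = F_u(φ(w)) · φ′(w)`,
so `F_u dz` is a well-defined 1-differential. -/
theorem hopf_differential_transformation (n : ℕ) (hn : 1 ≤ n)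
    (O O' : Set ℂ) (hO : IsOpen O) (hO' : IsOpen O')
    (φ : ℂ → ℂ) (hφ : DifferentiableOn ℂ φ O') (hmaps : Set.MapsTo φ O' O)
    (u : ℂ → EuclideanSpace ℂ (Fin n))
    (hu : ContDiffOn ℝ 1 u O) :
    ∀ w ∈ O', hopfF (u ∘ φ) w = hopfF u (φ w) * deriv φ w := by
  intro w hw
  have hφw : DifferentiableAt ℂ φ w := hφ.differentiableAt (hO'.mem_nhds hw)
  have hφwR : DifferentiableAt ℝ φ w := hφw.restrictScalars ℝ
  have huw : DifferentiableAt ℝ u (φ w) :=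
    (hu.contDiffAt (hO.mem_nhds (hmaps hw))).differentiableAt one_ne_zero
  have hcomp : fderiv ℝ (u ∘ φ) w = (fderiv ℝ u (φ w)).comp (fderiv ℝ φ w) :=
    fderiv_comp w huw hφwR
  set c := deriv φ w with hcdef
  have hfC : ∀ v : ℂ, fderiv ℂ φ w v = c * v := by
    intro v
    have h1 : fderiv ℂ φ w 1 = c := rfl
    calc fderiv ℂ φ w v = fderiv ℂ φ w (v • 1) := by rw [smul_eq_mul, mul_one]
      _ = v • fderiv ℂ φ w 1 := (fderiv ℂ φ w).map_smul v 1
      _ = c * v := by rw [h1, smul_eq_mul, mul_comm]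
  have hfR : ∀ v : ℂ, fderiv ℝ φ w v = c * v := by
    intro v
    rw [hφw.fderiv_restrictScalars ℝ]
    exact hfC v
  set D := fderiv ℝ u (φ w) with hDdef
  have hDc : ∀ z : ℂ, D z = z.re • D 1 + z.im • D Complex.I := by
    intro z
    have hz : z = z.re • (1 : ℂ) + z.im • Complex.I := by
      simp [Complex.real_smul]
    conv_lhs => rw [hz]
    rw [map_add, map_smul, map_smul]
  set ux := pd1 u (φ w) with huxdef
  set uy := pd2 u (φ w) with huydef
  have hD1 : D 1 = ux := rfl
  have hDI : D Complex.I = uy := rfl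
  have hp1 : pd1 (u ∘ φ) w = c.re • ux + c.im • uy := by
    rw [pd1, hcomp]
    simp only [ContinuousLinearMap.comp_apply, hfR 1, mul_one]
    rw [hDc c, hD1, hDI]
  have hp2 : pd2 (u ∘ φ) w = (-c.im) • ux + c.re • uy := by
    rw [pd2, hcomp]
    simp only [ContinuousLinearMap.comp_apply, hfR Complex.I]
    rw [hDc (c * Complex.I), hD1, hDI]
    simp [Complex.mul_re, Complex.mul_im]
  have hval : (u ∘ φ) w = u (φ w) := rfl
  set J := Jc (u (φ w)) with hJdef
  set P := rinner J ux with hP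
  set Q := rinner J uy with hQ
  have e1 : rinner J (pd1 (u ∘ φ) w) = c.re * P + c.im * Q := by
    rw [hp1, rinner_comb]
  have e2 : rinner J (pd2 (u ∘ φ) w) = (-c.im) * P + c.re * Q := by
    rw [hp2, rinner_comb]
  have hceq : (c.re : ℂ) + c.im * Complex.I = c := Complex.re_add_im c
  simp only [hopfF, hval, ← hJdef, e1, e2, ← hP, ← hQ, ← huxdef, ← huydef]
  push_cast
  conv_rhs => rw [← hceq]
  linear_combination ((c.im : ℂ) * (Q : ℂ)) * Complex.I_sq
end
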